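/- Let H = (A,B,E) be a bipartite graph, q ≥ 1, and let c be a uniformly random proper coloring of H with q colors (assuming at least one exists). If u ∈ A and v ∈ B are distinct vertices, then P(c(u) = c(v)) ≤ 1/q. -/

import Mathlib

open SimpleGraph

/-- Number of proper colorings of a graph with q colors. -/
noncomputable def chrom {V : Type*} (H : SimpleGraph V) (q : ℕ) : ℕ :=
  Nat.card {c : V → Fin q // ∀ a b, H.Adj a b → c a ≠ c b}

/-- Swap two colors. -/
def swapc {q : ℕ} (x y z : Fin q) : Fin q :=
  if z = x then y else if z = y then x else z

lemma swapc_invol {q : ℕ} (x y : Fin q) : Function.Involutive (swapc x y) := by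
  intro z
  unfold swapc
  by_cases h1 : z = x
  · subst h1
    by_cases h2 : y = z <;> simp [h2]
  · by_cases h2 : z = y
    · subst h2
      simp [h1]
    · simp [h1, h2]

lemma swapc_mem {q : ℕ} (x y z : Fin q) :
    (swapc x y z = x ∨ swapc x y z = y) ↔ (z = x ∨ z = y) := by
  unfold swapc
  by_cases h1 : z = x
  · subst h1; simp
  · by_cases h2 : z = y
    · subst h2; simp [h1]
    · simp [h1, h2]

lemma swapc_not_mem {q : ℕ} {x y z : Fin q} (hx : z ≠ x) (hy : z ≠ y) :
    swapc x y z = z := by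
  unfold swapc; simp [hx, hy]

lemma swapc_self {q : ℕ} (x z : Fin q) : swapc x x z = z := by
  unfold swapc
  split_ifs with h <;> simp_all

lemma swapc_left {q : ℕ} (x y : Fin q) : swapc x y x = y := by
  unfold swapc; simp

/-- The Kempe subgraph: edges of H both of whose endpoints are colored x or y. -/
def kgraph {V : Type*} (H : SimpleGraph V) {q : ℕ} (c : V → Fin q) (x y : Fin q) :
    SimpleGraph V where
  Adj a b := H.Adj a b ∧ (c a = x ∨ c a = y) ∧ (c b = x ∨ c b = y)
  symm := ⟨fun a b ⟨h1, h2, h3⟩ => ⟨h1.symm, h3, h2⟩⟩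
  loopless := ⟨fun a h => H.loopless.irrefl a h.1⟩

open Classical in
/-- Kempe swap: swap colors x,y on the Kempe component of v. -/
noncomputable def kswap {V : Type*} (H : SimpleGraph V) {q : ℕ} (x y : Fin q) (v : V)
    (c : V → Fin q) : V → Fin q :=
  fun w => if (kgraph H c x y).Reachable v w then swapc x y (c w) else c w

open Classical in
lemma kswap_apply {V : Type*} (H : SimpleGraph V) {q : ℕ} (x y : Fin q) (v : V)
    (c : V → Fin q) (w : V) :
    kswap H x y v c w =
      if (kgraph H c x y).Reachable v w then swapc x y (c w) else c w := rfl

lemma kswap_proper {V : Type*} (H : SimpleGraph V) {q : ℕ} (x y : Fin q) (v : V)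
    {c : V → Fin q} (hc : ∀ a b, H.Adj a b → c a ≠ c b) :
    ∀ a b, H.Adj a b → kswap H x y v c a ≠ kswap H x y v c b := by
  classical
  intro a b hab h
  rw [kswap_apply, kswap_apply] at h
  by_cases ha : (kgraph H c x y).Reachable v a <;>
    by_cases hb : (kgraph H c x y).Reachable v b
  · rw [if_pos ha, if_pos hb] at h
    exact hc a b hab ((swapc_invol x y).injective h)
  · rw [if_pos ha, if_neg hb] at h
    by_cases hamem : c a = x ∨ c a = y
    · by_cases hbmem : c b = x ∨ c b = y
      · exact hb (ha.trans (SimpleGraph.Adj.reachable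
          (show (kgraph H c x y).Adj a b from ⟨hab, hamem, hbmem⟩)))
      · apply hbmem
        rw [← h]
        exact (swapc_mem x y (c a)).mpr hamem
    · push_neg at hamem
      rw [swapc_not_mem hamem.1 hamem.2] at h
      exact hc a b hab h
  · rw [if_neg ha, if_pos hb] at h
    by_cases hbmem : c b = x ∨ c b = y
    · by_cases hamem : c a = x ∨ c a = y
      · exact ha (hb.trans (SimpleGraph.Adj.reachable
          (show (kgraph H c x y).Adj b a from ⟨hab.symm, hbmem, hamem⟩)))
      · apply hamem
        rw [h]
        exact (swapc_mem x y (c b)).mpr hbmem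
    · push_neg at hbmem
      rw [swapc_not_mem hbmem.1 hbmem.2] at h
      exact hc a b hab h
  · rw [if_neg ha, if_neg hb] at h
    exact hc a b hab h

lemma kgraph_kswap {V : Type*} (H : SimpleGraph V) {q : ℕ} (x y : Fin q) (v : V)
    (c : V → Fin q) :
    kgraph H (kswap H x y v c) x y = kgraph H c x y := by
  classical
  have key : ∀ w, (kswap H x y v c w = x ∨ kswap H x y v c w = y) ↔ (c w = x ∨ c w = y) := by
    intro w
    rw [kswap_apply]
    by_cases hw : (kgraph H c x y).Reachable v w
    · rw [if_pos hw]; exact swapc_mem x y (c w)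
    · rw [if_neg hw]
  ext a b
  show H.Adj a b ∧ _ ∧ _ ↔ H.Adj a b ∧ _ ∧ _
  rw [key a, key b]

lemma kswap_invol {V : Type*} (H : SimpleGraph V) {q : ℕ} (x y : Fin q) (v : V)
    (c : V → Fin q) :
    kswap H x y v (kswap H x y v c) = c := by
  classical
  funext w
  rw [kswap_apply, kgraph_kswap, kswap_apply]
  by_cases hw : (kgraph H c x y).Reachable v w
  · rw [if_pos hw, if_pos hw, swapc_invol]
  · rw [if_neg hw, if_neg hw]

/-- Parity along Kempe walks in a bipartite graph. -/
lemma kempe_parity {V : Type*} {H : SimpleGraph V} {A : Set V}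
    (hbip : ∀ a b, H.Adj a b → (a ∈ A ↔ b ∉ A)) {q : ℕ} {c : V → Fin q}
    (hc : ∀ a b, H.Adj a b → c a ≠ c b) {x y : Fin q}
    {a b : V} (p : (kgraph H c x y).Walk a b)
    (ha : (a ∈ A ∧ c a = y) ∨ (a ∉ A ∧ c a = x)) :
    (b ∈ A ∧ c b = y) ∨ (b ∉ A ∧ c b = x) := by
  induction p with
  | nil => exact ha
  | @cons s t b h p ih =>
    apply ih
    obtain ⟨hH, _, ht⟩ := h
    have hne : c s ≠ c t := hc s t hH
    have hside := hbip s t hH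
    rcases ha with ⟨hsA, hsy⟩ | ⟨hsA, hsx⟩
    · right
      refine ⟨hside.mp hsA, ?_⟩
      rcases ht with h' | h'
      · exact h'
      · exact absurd (hsy.trans h'.symm) hne
    · left
      constructor
      · by_contra htA
        exact hsA (hside.mpr (by simpa using htA))
      · rcases ht with h' | h'
        · exact absurd (hsx.trans h'.symm) hne
        · exact h'

theorem stmt_9 {V : Type*} [Fintype V] (H : SimpleGraph V) (A : Set V)
    (hbip : ∀ a b, H.Adj a b → (a ∈ A ↔ b ∉ A)) (q : ℕ) (hq : 1 ≤ q)
    (hex : 0 < chrom H q) (u v : V) (hu : u ∈ A) (hv : v ∉ A) (huv : u ≠ v) :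
    (Nat.card {c : V → Fin q // (∀ a b, H.Adj a b → c a ≠ c b) ∧ c u = c v} : ℝ) /
      (chrom H q : ℝ) ≤ 1 / q := by
  classical
  set S := {c : V → Fin q // (∀ a b, H.Adj a b → c a ≠ c b) ∧ c u = c v} with hS
  set T := {c : V → Fin q // ∀ a b, H.Adj a b → c a ≠ c b} with hT
  have key : Nat.card S * q ≤ chrom H q := by
    show Nat.card S * q ≤ Nat.card T
    have hinj := Nat.card_le_card_of_injective
      (f := fun p : S × Fin q =>
        (⟨kswap H (p.1.1 u) p.2 v p.1.1, kswap_proper H _ _ v p.1.2.1⟩ : T)) ?_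
    · calc Nat.card S * q = Nat.card (S × Fin q) := by
            rw [Nat.card_prod, Nat.card_eq_fintype_card (α := Fin q), Fintype.card_fin]
          _ ≤ Nat.card T := hinj
    · rintro ⟨⟨c, hc, hcuv⟩, k⟩ ⟨⟨c', hc', hcuv'⟩, k'⟩ heq
      simp only [Subtype.mk.injEq, Prod.mk.injEq] at heq ⊢
      have hval : ∀ (d : V → Fin q) (hd : ∀ a b, H.Adj a b → d a ≠ d b) (hduv : d u = d v)
          (m : Fin q), kswap H (d u) m v d v = m ∧ kswap H (d u) m v d u = d u := by
        intro d hd hduv m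
        constructor
        · rw [kswap_apply, if_pos (Reachable.refl v), ← hduv, swapc_left]
        · by_cases hm : m = d u
          · subst hm
            rw [kswap_apply]
            split_ifs with h
            · exact swapc_self _ _
            · rfl
          · rw [kswap_apply, if_neg]
            intro hreach
            obtain ⟨p⟩ := hreach
            have := kempe_parity hbip hd (x := d u) (y := m) p
              (Or.inr ⟨hv, hduv.symm⟩)
            rcases this with ⟨_, hcy⟩ | ⟨huA, _⟩
            · exact hm hcy.symm
            · exact huA hu
      obtain ⟨h1, h2⟩ := hval c hc hcuv k
      obtain ⟨h1', h2'⟩ := hval c' hc' hcuv' k'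
      have hu_eq : c u = c' u := by rw [← h2, ← h2', heq]
      have hk_eq : k = k' := by rw [← h1, ← h1', heq]
      have hc_eq : c = c' := by
        have h3 := congrArg (kswap H (c u) k v) heq
        rw [kswap_invol] at h3
        rw [hu_eq, hk_eq, kswap_invol] at h3
        exact h3
      exact ⟨Subtype.ext hc_eq, hk_eq⟩
  have hq0 : (0 : ℝ) < q := by exact_mod_cast hq
  have hN : (0 : ℝ) < chrom H q := by exact_mod_cast hex
  rw [div_le_div_iff₀ hN hq0]
  have hle : (Nat.card S * q : ℝ) ≤ chrom H q := by exact_mod_cast key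
  linarith
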